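/- (Poset Lemma / Quillen) Let X be a poset and f : X → X an order-preserving map such that f(x) ≤ x for all x ∈ X (or f(x) ≥ x for all x ∈ X). Then the inclusion of the image f(X) into X induces a homotopy equivalence of order complexes; in fact the order complex of f(X) is a deformation retract of the order complex of X. -/

import Mathlib

/-- The geometric realization of the order complex of a poset `X`: formal
convex combinations of points of `X` whose (finite) support is a chain. -/
def OrderComplex (X : Type*) [PartialOrder X] : Type _ :=
  {w : X → ℝ // (Function.support w).Finite ∧ IsChain (· ≤ ·) (Function.support w) ∧
    (∀ x, 0 ≤ w x) ∧ ∑ᶠ x, w x = 1}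

instance (X : Type*) [PartialOrder X] : TopologicalSpace (OrderComplex X) :=
  instTopologicalSpaceSubtype

/-- The subcomplex of `OrderComplex X` spanned by the image `f(X)`
(with its induced order): combinations supported on chains in `Set.range f`. -/
def OrderComplex.imageSub {X : Type*} [PartialOrder X] (f : X → X) :
    Set (OrderComplex X) :=
  {w | Function.support w.1 ⊆ Set.range f}

open Function Set

noncomputable section
namespace QuillenAux

variable {X : Type*} [PartialOrder X]

/-- support finset of a point of the order complex -/
def sF (w : OrderComplex X) : Finset X := w.2.1.toFinset

lemma mem_sF {w : OrderComplex X} {x : X} : x ∈ sF w ↔ w.1 x ≠ 0 := by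
  simp [sF, Set.Finite.mem_toFinset, Function.mem_support]

lemma supp_eq (w : OrderComplex X) : Function.support w.1 = ↑(sF w) :=
  (w.2.1.coe_toFinset).symm

lemma oc_nonneg (w : OrderComplex X) (x : X) : 0 ≤ w.1 x := w.2.2.2.1 x

lemma oc_chain (w : OrderComplex X) : IsChain (· ≤ ·) (Function.support w.1) := w.2.2.1

lemma sum_over (w : OrderComplex X) {E : Finset X} (hE : sF w ⊆ E) :
    ∑ x ∈ E, w.1 x = 1 := by
  have h := w.2.2.2.2
  rw [finsum_eq_sum_of_support_subset (s := E) _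
    (by rw [supp_eq]; exact_mod_cast hE)] at h
  exact h

lemma continuous_eval (x : X) : Continuous fun w : OrderComplex X => w.1 x :=
  (continuous_apply x).comp continuous_subtype_val

/-- Master continuity lemma: a finsum of functions dominated by the (moving) weights
is continuous. -/
lemma continuous_findom {Y : Type*} [TopologicalSpace Y] (φ : Y → OrderComplex X)
    (hφ : ∀ x, Continuous fun p => (φ p).1 x) (g : Y → X → ℝ)
    (h0 : ∀ p x, 0 ≤ g p x) (hgle : ∀ p x, g p x ≤ (φ p).1 x)
    (hgc : ∀ x, Continuous fun p => g p x) :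
    Continuous fun p => ∑ᶠ x, g p x := by
  classical
  rw [continuous_iff_continuousAt]
  intro p₀
  set F : Finset X := sF (φ p₀) with hF
  have hsupp : ∀ p, Function.support (g p) ⊆ Function.support (φ p).1 := by
    intro p x hx hzero
    exact hx (le_antisymm (hzero ▸ hgle p x) (h0 p x))
  have hgfin : ∀ p, (Function.support (g p)).Finite := fun p => (φ p).2.1.subset (hsupp p)
  -- decomposition over E p := F ∪ sF (φ p)
  have hsum : ∀ p, ∑ᶠ x, g p x = ∑ x ∈ F ∪ sF (φ p), g p x := by
    intro p
    apply finsum_eq_sum_of_support_subset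
    refine (hsupp p).trans ?_
    rw [supp_eq]
    exact_mod_cast Finset.subset_union_right
  have htail_nonneg : ∀ p, 0 ≤ ∑ᶠ x, g p x - ∑ x ∈ F, g p x := by
    intro p
    rw [hsum p, ← Finset.sum_sdiff (Finset.subset_union_left (s₂ := sF (φ p)))]
    have : 0 ≤ ∑ x ∈ (F ∪ sF (φ p)) \ F, g p x :=
      Finset.sum_nonneg fun x _ => h0 p x
    linarith
  have htail_le : ∀ p, ∑ᶠ x, g p x - ∑ x ∈ F, g p x ≤ 1 - ∑ x ∈ F, (φ p).1 x := by
    intro p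
    rw [hsum p, ← Finset.sum_sdiff (Finset.subset_union_left (s₂ := sF (φ p)))]
    have h1 : ∑ x ∈ (F ∪ sF (φ p)) \ F, g p x ≤ ∑ x ∈ (F ∪ sF (φ p)) \ F, (φ p).1 x :=
      Finset.sum_le_sum fun x _ => hgle p x
    have h2 : ∑ x ∈ (F ∪ sF (φ p)) \ F, (φ p).1 x + ∑ x ∈ F, (φ p).1 x = 1 := by
      rw [Finset.sum_sdiff (Finset.subset_union_left (s₂ := sF (φ p)))]
      exact sum_over _ Finset.subset_union_right
    linarith
  have hM : Continuous fun p => 1 - ∑ x ∈ F, (φ p).1 x := by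
    apply continuous_const.sub
    exact continuous_finset_sum _ fun x _ => hφ x
  have hMp₀ : (1 : ℝ) - ∑ x ∈ F, (φ p₀).1 x = 0 := by
    rw [sum_over _ (le_refl F)]; ring
  have htail0 : Filter.Tendsto (fun p => ∑ᶠ x, g p x - ∑ x ∈ F, g p x) (nhds p₀) (nhds 0) := by
    apply squeeze_zero htail_nonneg htail_le
    have := hM.tendsto p₀
    rwa [hMp₀] at this
  have hhead : ContinuousAt (fun p => ∑ x ∈ F, g p x) p₀ :=
    (continuous_finset_sum _ fun x _ => hgc x).continuousAt
  have htail_at : ContinuousAt (fun p => ∑ᶠ x, g p x - ∑ x ∈ F, g p x) p₀ := by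
    unfold ContinuousAt
    have hval : ∑ᶠ x, g p₀ x - ∑ x ∈ F, g p₀ x = 0 := by
      have : ∑ᶠ x, g p₀ x = ∑ x ∈ F, g p₀ x := by
        apply finsum_eq_sum_of_support_subset
        refine (hsupp p₀).trans ?_
        rw [supp_eq]
      rw [this]; ring
    beta_reduce
    rw [hval]
    exact htail0
  have : ContinuousAt (fun p => (∑ x ∈ F, g p x) + (∑ᶠ x, g p x - ∑ x ∈ F, g p x)) p₀ :=
    hhead.add htail_at
  convert this using 2 with p
  ring

open Classical in
/-- mass of `w` inside the set `S` -/
def mass (S : Set X) (w : OrderComplex X) : ℝ :=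
  ∑ x ∈ (sF w).filter (· ∈ S), w.1 x

lemma mass_eq_finsum (S : Set X) (w : OrderComplex X) :
    mass S w = ∑ᶠ x, S.indicator w.1 x := by
  classical
  have h : ∑ᶠ x, S.indicator w.1 x = ∑ x ∈ sF w, S.indicator w.1 x :=
    finsum_eq_sum_of_support_subset _ (by
      intro x hx
      rw [Function.mem_support] at hx
      have hw : w.1 x ≠ 0 := fun h0 => hx (by simp [Set.indicator_apply, h0])
      rw [← supp_eq] at *
      exact hw)
  rw [h, mass, Finset.sum_filter]
  exact Finset.sum_congr rfl fun x _ => by simp [Set.indicator_apply]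

lemma continuous_mass (S : Set X) : Continuous (mass (X := X) S) := by
  classical
  have : (mass (X := X) S) = fun w => ∑ᶠ x, S.indicator w.1 x := funext (mass_eq_finsum S)
  rw [this]
  refine continuous_findom id continuous_eval (fun w x => S.indicator w.1 x)
    (fun w x => ?_) (fun w x => ?_) (fun x => ?_)
  · exact Set.indicator_nonneg (fun y _ => oc_nonneg w y) x
  · exact Set.indicator_le_self' (fun y _ => oc_nonneg w y) x
  · by_cases hx : x ∈ S
    · simpa [Set.indicator_apply, hx] using continuous_eval x
    · simpa [Set.indicator_apply, hx] using continuous_const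
lemma mass_nonneg (S : Set X) (w : OrderComplex X) : 0 ≤ mass S w :=
  Finset.sum_nonneg fun x _ => oc_nonneg w x

lemma mass_le_one (S : Set X) (w : OrderComplex X) : mass S w ≤ 1 := by
  classical
  have h1 : ∑ x ∈ sF w, w.1 x = 1 := sum_over w (le_refl _)
  calc mass S w ≤ ∑ x ∈ sF w, w.1 x :=
        Finset.sum_le_sum_of_subset_of_nonneg (Finset.filter_subset _ _)
          (fun x _ _ => oc_nonneg w x)
    _ = 1 := h1

open Classical in
lemma mass_eq_sum' (S : Set X) (w : OrderComplex X) {E : Finset X} (hE : sF w ⊆ E) :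
    mass S w = ∑ x ∈ E.filter (· ∈ S), w.1 x := by
  classical
  rw [mass]
  apply Finset.sum_subset
  · exact Finset.filter_subset_filter _ hE
  · intro x hx hnx
    by_contra hne
    exact hnx (Finset.mem_filter.2 ⟨mem_sF.2 hne, (Finset.mem_filter.1 hx).2⟩)

lemma mass_eq_one_iff (S : Set X) (w : OrderComplex X) :
    mass S w = 1 ↔ Function.support w.1 ⊆ S := by
  classical
  constructor
  · intro h1 x hx
    by_contra hxS
    have hsplit := Finset.sum_filter_add_sum_filter_not (sF w) (· ∈ S) w.1
    rw [sum_over w (le_refl _)] at hsplit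
    have h2 : ∑ x ∈ (sF w).filter (fun x => ¬ x ∈ S), w.1 x = 0 := by
      have := h1; rw [mass] at this; linarith
    have hx0 : w.1 x = 0 := by
      have hmem : x ∈ (sF w).filter (fun x => ¬ x ∈ S) :=
        Finset.mem_filter.2 ⟨mem_sF.2 hx, hxS⟩
      have := (Finset.sum_eq_zero_iff_of_nonneg
        (fun y _ => oc_nonneg w y)).1 h2 x hmem
      exact this
    exact hx hx0
  · intro hsub
    have hfe : (sF w).filter (· ∈ S) = sF w :=
      Finset.filter_eq_self.2 fun x hx => hsub (mem_sF.1 hx)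
    rw [mass, hfe]
    exact sum_over w (le_refl _)
/-- tail mass: total weight at `x` or above -/
def TT (w : OrderComplex X) (x : X) : ℝ := mass {y | x ≤ y} w

/-- strict tail mass -/
def TT' (w : OrderComplex X) (x : X) : ℝ := mass {y | x < y} w

lemma TT_eq (w : OrderComplex X) (x : X) : TT w x = w.1 x + TT' w x := by
  classical
  rw [TT, TT', mass, mass]
  by_cases hx : x ∈ sF w
  · have hins : (sF w).filter (· ∈ {y | x ≤ y}) =
        insert x ((sF w).filter (· ∈ {y | x < y})) := by
      ext y
      simp only [Finset.mem_filter, Finset.mem_insert, Set.mem_setOf_eq]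
      constructor
      · rintro ⟨hy, hxy⟩
        rcases eq_or_ne y x with h | h
        · exact Or.inl h
        · exact Or.inr ⟨hy, lt_of_le_of_ne hxy (Ne.symm h)⟩
      · rintro (h | ⟨hy, hxy⟩)
        · exact ⟨h ▸ hx, h ▸ le_refl x⟩
        · exact ⟨hy, le_of_lt hxy⟩
    rw [hins, Finset.sum_insert (by simp)]
  · have hx0 : w.1 x = 0 := by
      by_contra h; exact hx (mem_sF.2 h)
    rw [hx0, zero_add]
    apply Finset.sum_congr _ (fun _ _ => rfl)
    ext y
    simp only [Finset.mem_filter, Set.mem_setOf_eq]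
    constructor
    · rintro ⟨hy, hxy⟩
      refine ⟨hy, lt_of_le_of_ne hxy ?_⟩
      rintro rfl; exact hx hy
    · rintro ⟨hy, hxy⟩; exact ⟨hy, le_of_lt hxy⟩

lemma TT'_nonneg (w : OrderComplex X) (x : X) : 0 ≤ TT' w x := mass_nonneg _ w

lemma TT'_le_TT (w : OrderComplex X) (x : X) : TT' w x ≤ TT w x := by
  rw [TT_eq]; have := oc_nonneg w x; linarith

lemma TT_le_one (w : OrderComplex X) (x : X) : TT w x ≤ 1 := mass_le_one _ w

lemma TT_le_TT'_of_lt (w : OrderComplex X) {b x : X} (hbx : b < x) :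
    TT w x ≤ TT' w b := by
  classical
  rw [TT, TT', mass, mass]
  apply Finset.sum_le_sum_of_subset_of_nonneg
  · intro y hy
    rw [Finset.mem_filter] at hy ⊢
    exact ⟨hy.1, lt_of_lt_of_le hbx hy.2⟩
  · exact fun y _ _ => oc_nonneg w y

/-- the "kept" (upper) part of the weight at `x`, at time `s` -/
def topF (s : ℝ) (w : OrderComplex X) (x : X) : ℝ :=
  min s (TT w x) - min s (TT' w x)

def botF (s : ℝ) (w : OrderComplex X) (x : X) : ℝ := w.1 x - topF s w x

lemma topF_nonneg (s : ℝ) (w : OrderComplex X) (x : X) : 0 ≤ topF s w x :=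
  sub_nonneg.2 (min_le_min le_rfl (TT'_le_TT w x))

lemma topF_le (s : ℝ) (w : OrderComplex X) (x : X) : topF s w x ≤ w.1 x := by
  have h1 : min s (TT w x) ≤ min s (TT' w x) + w.1 x := by
    have h2 : min s (TT' w x + w.1 x) ≤ min (s + w.1 x) (TT' w x + w.1 x) :=
      min_le_min (le_add_of_nonneg_right (oc_nonneg w x)) le_rfl
    rw [min_add_add_right] at h2
    have h3 : TT w x = TT' w x + w.1 x := by rw [TT_eq]; ring
    rw [h3]
    exact h2
  rw [topF]; linarith

lemma botF_nonneg (s : ℝ) (w : OrderComplex X) (x : X) : 0 ≤ botF s w x :=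
  sub_nonneg.2 (topF_le s w x)

lemma botF_le (s : ℝ) (w : OrderComplex X) (x : X) : botF s w x ≤ w.1 x := by
  have := topF_nonneg s w x; rw [botF]; linarith

lemma topF_zero_of (s : ℝ) (w : OrderComplex X) {x : X} (hx : w.1 x = 0) :
    topF s w x = 0 := by
  have h3 : TT w x = TT' w x := by rw [TT_eq, hx, zero_add]
  rw [topF, h3, sub_self]

lemma botF_zero_of (s : ℝ) (w : OrderComplex X) {x : X} (hx : w.1 x = 0) :
    botF s w x = 0 := by rw [botF, topF_zero_of s w hx, hx, sub_zero]

lemma lt_TT_of_botF_ne (s : ℝ) (w : OrderComplex X) {x : X} (hx : botF s w x ≠ 0) :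
    s < TT w x := by
  by_contra hc
  push_neg at hc
  have h1 : min s (TT w x) = TT w x := min_eq_right hc
  have h2 : min s (TT' w x) = TT' w x := min_eq_right ((TT'_le_TT w x).trans hc)
  apply hx
  rw [botF, topF, h1, h2, TT_eq]
  ring

lemma TT'_lt_of_topF_ne (s : ℝ) (w : OrderComplex X) {x : X} (hx : topF s w x ≠ 0) :
    TT' w x < s := by
  by_contra hc
  push_neg at hc
  have h1 : min s (TT' w x) = s := min_eq_left hc
  have h2 : min s (TT w x) = s := min_eq_left (hc.trans (TT'_le_TT w x))
  exact hx (by rw [topF, h1, h2, sub_self])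
open Classical in
lemma sum_topF_aux (s : ℝ) (hs0 : 0 ≤ s) (w : OrderComplex X) :
    ∀ (n : ℕ) (D : Finset X), D.card ≤ n → D ⊆ sF w →
      (∀ x ∈ D, ∀ y ∈ sF w, x ≤ y → y ∈ D) →
      ∑ x ∈ D, topF s w x = min s (∑ x ∈ D, w.1 x) := by
  intro n
  induction n with
  | zero =>
    intro D hcard _ _
    have : D = ∅ := Finset.card_eq_zero.1 (Nat.le_zero.1 hcard)
    subst this
    simp [min_eq_right hs0]
  | succ n ih =>
    intro D hcard hsub hup
    rcases D.eq_empty_or_nonempty with rfl | hne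
    · simp [min_eq_right hs0]
    obtain ⟨m, hmD, hmin⟩ := D.exists_minimal hne
    -- m is the least element of D
    have hleast : ∀ y ∈ D, m ≤ y := by
      intro y hy
      rcases eq_or_ne y m with rfl | hne'
      · exact le_refl y
      · have hcomp := oc_chain w (x := m) (y := y) ?_ ?_ (Ne.symm hne')
        · rcases hcomp with h | h
          · exact h
          · exact hmin hy h
        · rw [supp_eq]; exact_mod_cast hsub hmD
        · rw [supp_eq]; exact_mod_cast hsub hy
    have hTm : TT w m = ∑ x ∈ D, w.1 x := by
      rw [TT, mass]
      apply Finset.sum_congr _ (fun _ _ => rfl)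
      ext y
      simp only [Finset.mem_filter, Set.mem_setOf_eq]
      exact ⟨fun ⟨hy, hmy⟩ => hup m hmD y hy hmy, fun hy => ⟨hsub hy, hleast y hy⟩⟩
    have hT'm : TT' w m = ∑ x ∈ D.erase m, w.1 x := by
      rw [TT', mass]
      apply Finset.sum_congr _ (fun _ _ => rfl)
      ext y
      simp only [Finset.mem_filter, Set.mem_setOf_eq, Finset.mem_erase]
      constructor
      · rintro ⟨hy, hmy⟩
        exact ⟨ne_of_gt hmy, hup m hmD y hy (le_of_lt hmy)⟩
      · rintro ⟨hne', hy⟩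
        exact ⟨hsub hy, lt_of_le_of_ne (hleast y hy) (Ne.symm hne')⟩
    have hupe : ∀ x ∈ D.erase m, ∀ y ∈ sF w, x ≤ y → y ∈ D.erase m := by
      intro x hx y hy hxy
      rw [Finset.mem_erase] at hx ⊢
      refine ⟨?_, hup x hx.2 y hy hxy⟩
      rintro rfl
      exact hx.1 (le_antisymm hxy (hleast x hx.2))
    have hcard' : (D.erase m).card ≤ n := by
      have := Finset.card_erase_of_mem hmD
      omega
    have hihe := ih (D.erase m) hcard' ((Finset.erase_subset _ _).trans hsub) hupe
    have hsplit : ∑ x ∈ D, topF s w x = topF s w m + ∑ x ∈ D.erase m, topF s w x :=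
      (Finset.add_sum_erase D _ hmD).symm
    rw [hsplit, hihe, topF, hTm, hT'm]
    ring

open Classical in
lemma sum_topF (s : ℝ) (hs0 : 0 ≤ s) (hs1 : s ≤ 1) (w : OrderComplex X) :
    ∑ x ∈ sF w, topF s w x = s := by
  have h := sum_topF_aux s hs0 w (sF w).card (sF w) le_rfl le_rfl
    (fun x _ y hy _ => hy)
  rw [sum_over w (le_refl _)] at h
  rw [h, min_eq_left hs1]
section WithMap
variable (f : X → X)

open Classical in
/-- pushforward along `f` of the "moved" (lower) part of the weight -/
def pushB (s : ℝ) (w : OrderComplex X) (z : X) : ℝ :=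
  ∑ x ∈ (sF w).filter (fun x => f x = z), botF s w x

lemma pushB_nonneg (s : ℝ) (w : OrderComplex X) (z : X) : 0 ≤ pushB f s w z :=
  Finset.sum_nonneg fun x _ => botF_nonneg s w x

open Classical in
lemma pushB_ne_imp {s : ℝ} {w : OrderComplex X} {z : X} (h : pushB f s w z ≠ 0) :
    ∃ x ∈ sF w, f x = z ∧ botF s w x ≠ 0 := by
  obtain ⟨x, hx, hxne⟩ := Finset.exists_ne_zero_of_sum_ne_zero h
  rw [Finset.mem_filter] at hx
  exact ⟨x, hx.1, hx.2, hxne⟩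

open Classical in
lemma pushB_zero_outside {s : ℝ} {w : OrderComplex X} {z : X}
    (h : z ∉ (sF w).image f) : pushB f s w z = 0 := by
  apply Finset.sum_eq_zero
  intro x hx
  rw [Finset.mem_filter] at hx
  exact absurd (hx.2 ▸ Finset.mem_image_of_mem f hx.1) h
open Classical in
lemma sum_pushB (s : ℝ) (hs0 : 0 ≤ s) (hs1 : s ≤ 1) (w : OrderComplex X) :
    ∑ z ∈ (sF w).image f, pushB f s w z = 1 - s := by
  have h1 : ∑ z ∈ (sF w).image f, pushB f s w z = ∑ x ∈ sF w, botF s w x := by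
    apply Finset.sum_image'
    intro i _
    rfl
  rw [h1]
  have h2 : ∑ x ∈ sF w, botF s w x
      = (∑ x ∈ sF w, w.1 x) - ∑ x ∈ sF w, topF s w x := by
    rw [← Finset.sum_sub_distrib]; rfl
  rw [h2, sum_over w (le_refl _), sum_topF s hs0 hs1 w]

/-- the time-`s` prism map: keep the top `s` of the mass, push the rest through `f` -/
def HF (s : ℝ) (w : OrderComplex X) : X → ℝ :=
  fun z => topF s w z + pushB f s w z

open Classical in
lemma HF_supp (s : ℝ) (w : OrderComplex X) :
    Function.support (HF f s w) ⊆ ↑(sF w ∪ (sF w).image f) := by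
  intro z hz
  rw [Function.mem_support, HF] at hz
  rcases eq_or_ne (topF s w z) 0 with h1 | h1
  · have h2 : pushB f s w z ≠ 0 := by
      intro h0; exact hz (by rw [h1, h0, add_zero])
    by_contra hmem
    apply h2
    apply pushB_zero_outside
    intro hin
    exact hmem (by simp only [Finset.coe_union, Set.mem_union]; right; exact_mod_cast hin)
  · have hwz : w.1 z ≠ 0 := fun h0 => h1 (topF_zero_of s w h0)
    simp only [Finset.coe_union, Set.mem_union]
    left; exact_mod_cast mem_sF.2 hwz

lemma HF_nonneg (s : ℝ) (w : OrderComplex X) (z : X) : 0 ≤ HF f s w z :=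
  add_nonneg (topF_nonneg s w z) (pushB_nonneg f s w z)

open Classical in
lemma HF_sum (s : ℝ) (hs0 : 0 ≤ s) (hs1 : s ≤ 1) (w : OrderComplex X) :
    ∑ᶠ z, HF f s w z = 1 := by
  rw [finsum_eq_sum_of_support_subset _ (HF_supp f s w)]
  have htop : ∑ z ∈ sF w ∪ (sF w).image f, topF s w z = ∑ x ∈ sF w, topF s w x := by
    symm
    apply Finset.sum_subset Finset.subset_union_left
    intro x _ hx
    exact topF_zero_of s w (by by_contra h; exact hx (mem_sF.2 h))
  have hpush : ∑ z ∈ sF w ∪ (sF w).image f, pushB f s w z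
      = ∑ z ∈ (sF w).image f, pushB f s w z := by
    symm
    apply Finset.sum_subset Finset.subset_union_right
    intro z _ hz
    exact pushB_zero_outside f hz
  change ∑ z ∈ sF w ∪ (sF w).image f, (topF s w z + pushB f s w z) = 1
  rw [Finset.sum_add_distrib, htop, hpush, sum_topF s hs0 hs1 w, sum_pushB f s hs0 hs1 w]
  ring

variable {f} in
open Classical in
lemma HF_chain (hmono : Monotone f) (hle : ∀ x, f x ≤ x) (s : ℝ) (w : OrderComplex X) :
    IsChain (· ≤ ·) (Function.support (HF f s w)) := by
  -- elements of the support come from kept mass (in supp w) or moved mass (f-image)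
  have hcases : ∀ z ∈ Function.support (HF f s w),
      (topF s w z ≠ 0 ∧ w.1 z ≠ 0) ∨ ∃ x ∈ sF w, f x = z ∧ botF s w x ≠ 0 := by
    intro z hz
    rw [Function.mem_support, HF] at hz
    rcases eq_or_ne (topF s w z) 0 with h1 | h1
    · right
      apply pushB_ne_imp f
      intro h0; exact hz (by rw [h1, h0, add_zero])
    · left
      exact ⟨h1, fun h0 => h1 (topF_zero_of s w h0)⟩
  -- key comparison: a kept element dominates any moved element
  have hkey : ∀ b x : X, topF s w b ≠ 0 → botF s w x ≠ 0 → w.1 x ≠ 0 → x ≤ b := by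
    intro b x htop hbot hwx
    have hwb : w.1 b ≠ 0 := fun h0 => htop (topF_zero_of s w h0)
    rcases eq_or_ne x b with rfl | hne
    · exact le_refl x
    · have hcomp := oc_chain w (x := x) (y := b) (Function.mem_support.2 hwx)
        (Function.mem_support.2 hwb) hne
      rcases hcomp with h | h
      · exact h
      · exfalso
        have hlt : b < x := lt_of_le_of_ne h (Ne.symm hne)
        have h1 : s < TT w x := lt_TT_of_botF_ne s w hbot
        have h2 : TT' w b < s := TT'_lt_of_topF_ne s w htop
        have h3 : TT w x ≤ TT' w b := TT_le_TT'_of_lt w hlt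
        linarith
  intro a ha b hb hne
  rcases hcases a ha with ⟨hta, hwa⟩ | ⟨x, hx, hfx, hbx⟩
  · rcases hcases b hb with ⟨htb, hwb⟩ | ⟨y, hy, hfy, hby⟩
    · exact oc_chain w (Function.mem_support.2 hwa) (Function.mem_support.2 hwb) hne
    · -- b = f y moved, a kept : f y ≤ y ≤ a
      right
      have hwy : w.1 y ≠ 0 := mem_sF.1 hy
      have : y ≤ a := hkey a y hta hby hwy
      calc b = f y := hfy.symm
        _ ≤ y := hle y
        _ ≤ a := this
  · rcases hcases b hb with ⟨htb, hwb⟩ | ⟨y, hy, hfy, hby⟩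
    · left
      have hwx : w.1 x ≠ 0 := mem_sF.1 hx
      have : x ≤ b := hkey b x htb hbx hwx
      calc a = f x := hfx.symm
        _ ≤ x := hle x
        _ ≤ b := this
    · -- both moved
      have hwx : w.1 x ≠ 0 := mem_sF.1 hx
      have hwy : w.1 y ≠ 0 := mem_sF.1 hy
      have hxyne : x ≠ y := by rintro rfl; exact hne (hfx ▸ hfy ▸ rfl)
      rcases oc_chain w (Function.mem_support.2 hwx) (Function.mem_support.2 hwy) hxyne
        with h | h
      · left; calc a = f x := hfx.symm
          _ ≤ f y := hmono h
          _ = b := hfy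
      · right; calc b = f y := hfy.symm
          _ ≤ f x := hmono h
          _ = a := hfx

variable {f} in
open Classical in
/-- the prism map as a point of the order complex -/
def HW (hmono : Monotone f) (hle : ∀ x, f x ≤ x) (s : ℝ) (hs0 : 0 ≤ s) (hs1 : s ≤ 1)
    (w : OrderComplex X) : OrderComplex X :=
  ⟨HF f s w,
    (sF w ∪ (sF w).image f).finite_toSet.subset (HF_supp f s w),
    HF_chain hmono hle s w, HF_nonneg f s w, HF_sum f s hs0 hs1 w⟩
open Classical in
lemma sF_HW_sub {hmono : Monotone f} {hle : ∀ x, f x ≤ x} {s : ℝ} {hs0 : 0 ≤ s}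
    {hs1 : s ≤ 1} {w : OrderComplex X} :
    sF (HW hmono hle s hs0 hs1 w) ⊆ sF w ∪ (sF w).image f := by
  intro z hz
  have := HF_supp f s w (Function.mem_support.2 (mem_sF.1 hz))
  exact_mod_cast this

variable {f} in
lemma HW_eq_one (hmono : Monotone f) (hle : ∀ x, f x ≤ x) {s : ℝ} (hs : s = 1)
    (hs0 : 0 ≤ s) (hs1 : s ≤ 1) (w : OrderComplex X) :
    HW hmono hle s hs0 hs1 w = w := by
  subst hs
  apply Subtype.ext
  funext z
  show HF f 1 w z = w.1 z
  have htop : topF 1 w z = w.1 z := by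
    rw [topF, min_eq_right (TT_le_one w z),
      min_eq_right ((TT'_le_TT w z).trans (TT_le_one w z)), TT_eq]
    ring
  have hbot : ∀ x, botF 1 w x = 0 := by
    intro x
    rw [botF, topF, min_eq_right (TT_le_one w x),
      min_eq_right ((TT'_le_TT w x).trans (TT_le_one w x)), TT_eq]
    ring
  have hpush : pushB f 1 w z = 0 := Finset.sum_eq_zero fun x _ => hbot x
  rw [HF, htop, hpush, add_zero]

open Classical in
variable {f} in
lemma mass_range_HW (hmono : Monotone f) (hle : ∀ x, f x ≤ x) {s : ℝ} (hs0 : 0 ≤ s)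
    (hs1 : s ≤ 1) (w : OrderComplex X) :
    1 - s ≤ mass (Set.range f) (HW hmono hle s hs0 hs1 w) := by
  rw [mass_eq_sum' (Set.range f) _ (sF_HW_sub f)]
  have h1 : ∑ z ∈ (sF w).image f, pushB f s w z
      ≤ ∑ z ∈ (sF w ∪ (sF w).image f).filter (· ∈ Set.range f), pushB f s w z := by
    apply Finset.sum_le_sum_of_subset_of_nonneg
    · intro z hz
      rw [Finset.mem_filter]
      refine ⟨Finset.mem_union_right _ hz, ?_⟩
      obtain ⟨x, _, rfl⟩ := Finset.mem_image.1 hz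
      exact Set.mem_range_self x
    · exact fun z _ _ => pushB_nonneg f s w z
  have h2 : ∑ z ∈ (sF w ∪ (sF w).image f).filter (· ∈ Set.range f), pushB f s w z
      ≤ ∑ z ∈ (sF w ∪ (sF w).image f).filter (· ∈ Set.range f),
          (HW hmono hle s hs0 hs1 w).1 z := by
    apply Finset.sum_le_sum
    intro z _
    show pushB f s w z ≤ HF f s w z
    have := topF_nonneg s w z
    rw [HF]; linarith
  rw [sum_pushB f s hs0 hs1 w] at h1
  exact h1.trans h2

open Classical in
lemma pushB_eq_finsum (s : ℝ) (w : OrderComplex X) (z : X) :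
    pushB f s w z = ∑ᶠ x, (if f x = z then botF s w x else 0) := by
  have h : ∑ᶠ x, (if f x = z then botF s w x else 0)
      = ∑ x ∈ sF w, (if f x = z then botF s w x else 0) := by
    apply finsum_eq_sum_of_support_subset
    intro x hx
    rw [Function.mem_support] at hx
    have hb : botF s w x ≠ 0 := by
      intro h0; apply hx; split <;> simp [h0]
    have hw : w.1 x ≠ 0 := fun h0 => hb (botF_zero_of s w h0)
    rw [← supp_eq] at *
    exact hw
  rw [h]
  show (∑ x ∈ (sF w).filter (fun x => f x = z), botF s w x) = _
  rw [Finset.sum_filter]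

/-- time value for the reparametrized prism homotopy -/
def sVal (p : unitInterval × OrderComplex X) : ℝ :=
  1 - (1 - (p.1 : ℝ)) * (1 - mass (Set.range f) p.2)

lemma sVal_nonneg (p : unitInterval × OrderComplex X) : 0 ≤ sVal f p := by
  have h1 : (p.1 : ℝ) ≤ 1 := p.1.2.2
  have h2 : 0 ≤ (p.1 : ℝ) := p.1.2.1
  have h3 : 0 ≤ mass (Set.range f) p.2 := mass_nonneg _ _
  have h4 : mass (Set.range f) p.2 ≤ 1 := mass_le_one _ _
  have : (1 - (p.1 : ℝ)) * (1 - mass (Set.range f) p.2) ≤ 1 * 1 := by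
    apply mul_le_mul <;> linarith
  rw [sVal]; linarith

lemma sVal_le_one (p : unitInterval × OrderComplex X) : sVal f p ≤ 1 := by
  have h1 : (p.1 : ℝ) ≤ 1 := p.1.2.2
  have h3 : 0 ≤ mass (Set.range f) p.2 := mass_nonneg _ _
  have h4 : mass (Set.range f) p.2 ≤ 1 := mass_le_one _ _
  have : 0 ≤ (1 - (p.1 : ℝ)) * (1 - mass (Set.range f) p.2) := by
    apply mul_nonneg <;> linarith
  rw [sVal]; linarith

lemma continuous_sVal : Continuous (sVal f (X := X)) := by
  have ht : Continuous fun p : unitInterval × OrderComplex X => (p.1 : ℝ) :=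
    continuous_subtype_val.comp continuous_fst
  have hτ : Continuous fun p : unitInterval × OrderComplex X =>
      mass (Set.range f) p.2 := (continuous_mass _).comp continuous_snd
  exact continuous_const.sub ((continuous_const.sub ht).mul (continuous_const.sub hτ))

section Homotopies
variable {f}
variable (hmono : Monotone f) (hle : ∀ x, f x ≤ x)

/-- the reparametrized prism homotopy, as a bare function -/
def PhiFun (p : unitInterval × OrderComplex X) : OrderComplex X :=
  HW hmono hle (sVal f p) (sVal_nonneg f p) (sVal_le_one f p) p.2

lemma continuous_PhiFun : Continuous (PhiFun hmono hle) := by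
  classical
  apply Continuous.subtype_mk
  apply continuous_pi
  intro z
  show Continuous fun p : unitInterval × OrderComplex X =>
    topF (sVal f p) p.2 z + pushB f (sVal f p) p.2 z
  have hs : Continuous (sVal f (X := X)) := continuous_sVal f
  have hTT : ∀ x : X, Continuous fun p : unitInterval × OrderComplex X => TT p.2 x :=
    fun x => (continuous_mass _).comp continuous_snd
  have hTT' : ∀ x : X, Continuous fun p : unitInterval × OrderComplex X => TT' p.2 x :=
    fun x => (continuous_mass _).comp continuous_snd
  have hval : ∀ x : X, Continuous fun p : unitInterval × OrderComplex X => (p.2).1 x :=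
    fun x => (continuous_eval x).comp continuous_snd
  have htopc : ∀ x : X, Continuous fun p : unitInterval × OrderComplex X =>
      topF (sVal f p) p.2 x := by
    intro x
    exact ((hs.min (hTT x)).sub (hs.min (hTT' x)))
  apply Continuous.add
  · exact htopc z
  · have hre : (fun p : unitInterval × OrderComplex X => pushB f (sVal f p) p.2 z)
        = fun p => ∑ᶠ x, (if f x = z then botF (sVal f p) p.2 x else 0) := by
      funext p; exact pushB_eq_finsum f (sVal f p) p.2 z
    rw [hre]
    apply continuous_findom (fun p : unitInterval × OrderComplex X => p.2)
      (fun x => hval x)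
    · intro p x
      split
      · exact botF_nonneg _ _ _
      · exact le_refl 0
    · intro p x
      split
      · exact botF_le _ _ _
      · exact oc_nonneg _ _
    · intro x
      by_cases hfx : f x = z
      · simp only [hfx, if_true]
        exact (hval x).sub (htopc x)
      · simp only [hfx, if_false]
        exact continuous_const

lemma mem_imageSub_iff (w : OrderComplex X) :
    w ∈ OrderComplex.imageSub f ↔ mass (Set.range f) w = 1 :=
  ⟨fun h => (mass_eq_one_iff _ w).2 h, fun h => (mass_eq_one_iff _ w).1 h⟩

lemma PhiFun_of_sval_one {p : unitInterval × OrderComplex X} (h : sVal f p = 1) :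
    PhiFun hmono hle p = p.2 := HW_eq_one hmono hle h _ _ _

lemma PhiFun_of_mem {p : unitInterval × OrderComplex X}
    (h : p.2 ∈ OrderComplex.imageSub f) : PhiFun hmono hle p = p.2 := by
  apply PhiFun_of_sval_one
  rw [sVal, (mem_imageSub_iff p.2).1 h]
  ring

lemma PhiFun_one (w : OrderComplex X) : PhiFun hmono hle (1, w) = w := by
  apply PhiFun_of_sval_one
  rw [sVal]
  norm_num

/-- the map pushing everything into the star of the subcomplex -/
def phi0 (w : OrderComplex X) : OrderComplex X := PhiFun hmono hle (0, w)

lemma continuous_phi0 : Continuous (phi0 hmono hle) :=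
  (continuous_PhiFun hmono hle).comp (continuous_const.prodMk continuous_id)

lemma phi0_of_mem {w : OrderComplex X} (h : w ∈ OrderComplex.imageSub f) :
    phi0 hmono hle w = w := PhiFun_of_mem hmono hle h

lemma phi0_mass_pos (w : OrderComplex X) :
    0 < mass (Set.range f) (phi0 hmono hle w) := by
  by_cases hw : w ∈ OrderComplex.imageSub f
  · rw [phi0_of_mem hmono hle hw, (mem_imageSub_iff w).1 hw]
    norm_num
  · have hτ1 : mass (Set.range f) w ≠ 1 := fun h => hw ((mem_imageSub_iff w).2 h)
    have hτle : mass (Set.range f) w ≤ 1 := mass_le_one _ _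
    have hτlt : mass (Set.range f) w < 1 := lt_of_le_of_ne hτle hτ1
    have hsv : sVal f ((0 : unitInterval), w) = mass (Set.range f) w := by
      rw [sVal]
      norm_num
    have := mass_range_HW hmono hle (sVal_nonneg f ((0 : unitInterval), w))
      (sVal_le_one f ((0 : unitInterval), w)) w
    have h2 : (0 : ℝ) < 1 - sVal f ((0 : unitInterval), w) := by
      rw [hsv]; linarith
    calc (0:ℝ) < 1 - sVal f ((0 : unitInterval), w) := h2
      _ ≤ _ := this

open Classical in
lemma mass_eq_sum_ind (S : Set X) (u : OrderComplex X) :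
    mass S u = ∑ z ∈ sF u, S.indicator u.1 z := by
  rw [mass, Finset.sum_filter]
  exact Finset.sum_congr rfl fun z _ => by simp [Set.indicator_apply]

/-- convex combination of a point with its renormalized part inside the subcomplex -/
def mixF (t : ℝ) (u : OrderComplex X) (z : X) : ℝ :=
  (1 - t) * ((Set.range f).indicator u.1 z / mass (Set.range f) u) + t * u.1 z

lemma mixF_supp (t : ℝ) (u : OrderComplex X) :
    Function.support (mixF (f := f) t u) ⊆ Function.support u.1 := by
  classical
  intro z hz
  rw [Function.mem_support] at hz ⊢
  intro h0
  apply hz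
  have hind : (Set.range f).indicator u.1 z = 0 := by
    rw [Set.indicator_apply]
    split <;> simp [h0]
  rw [mixF, hind, h0]
  ring

lemma mixW_sum (t : ℝ) (u : OrderComplex X) (hu : 0 < mass (Set.range f) u) :
    ∑ᶠ z, mixF (f := f) t u z = 1 := by
  classical
  have hsub : Function.support (mixF (f := f) t u) ⊆ ↑(sF u) := by
    rw [← supp_eq]; exact mixF_supp t u
  rw [finsum_eq_sum_of_support_subset _ hsub]
  have h1 : ∑ z ∈ sF u, mixF (f := f) t u z
      = (1 - t) * ((∑ z ∈ sF u, (Set.range f).indicator u.1 z) / mass (Set.range f) u)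
        + t * ∑ z ∈ sF u, u.1 z := by
    unfold mixF
    rw [Finset.sum_add_distrib, ← Finset.mul_sum, ← Finset.mul_sum, ← Finset.sum_div]
  rw [h1, ← mass_eq_sum_ind, div_self (ne_of_gt hu), sum_over u (le_refl _)]
  ring

def mixW (t : ℝ) (ht0 : 0 ≤ t) (ht1 : t ≤ 1) (u : OrderComplex X)
    (hu : 0 < mass (Set.range f) u) : OrderComplex X :=
  ⟨mixF (f := f) t u, u.2.1.subset (mixF_supp t u),
   IsChain.mono (mixF_supp t u) (oc_chain u),
   fun z => add_nonneg (mul_nonneg (by linarith)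
     (div_nonneg (Set.indicator_nonneg (fun y _ => oc_nonneg u y) z) hu.le))
     (mul_nonneg ht0 (oc_nonneg u z)),
   mixW_sum t u hu⟩
/-- the straight-line homotopy (composed with `phi0`), as a bare function -/
def mix2 (p : unitInterval × OrderComplex X) : OrderComplex X :=
  mixW (f := f) (p.1 : ℝ) p.1.2.1 p.1.2.2 (phi0 hmono hle p.2)
    (phi0_mass_pos hmono hle p.2)

lemma continuous_mix2 : Continuous (mix2 hmono hle) := by
  classical
  apply Continuous.subtype_mk
  apply continuous_pi
  intro z
  show Continuous fun p : unitInterval × OrderComplex X =>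
    (1 - (p.1 : ℝ)) * ((Set.range f).indicator (phi0 hmono hle p.2).1 z
        / mass (Set.range f) (phi0 hmono hle p.2))
      + (p.1 : ℝ) * (phi0 hmono hle p.2).1 z
  have ht : Continuous fun p : unitInterval × OrderComplex X => (p.1 : ℝ) :=
    continuous_subtype_val.comp continuous_fst
  have hphi : Continuous fun p : unitInterval × OrderComplex X =>
      phi0 hmono hle p.2 := (continuous_phi0 hmono hle).comp continuous_snd
  have hτ : Continuous fun p : unitInterval × OrderComplex X =>
      mass (Set.range f) (phi0 hmono hle p.2) := (continuous_mass _).comp hphi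
  have hτne : ∀ p : unitInterval × OrderComplex X,
      mass (Set.range f) (phi0 hmono hle p.2) ≠ 0 :=
    fun p => ne_of_gt (phi0_mass_pos hmono hle p.2)
  have hu : Continuous fun p : unitInterval × OrderComplex X =>
      (phi0 hmono hle p.2).1 z := (continuous_eval z).comp hphi
  have hind : Continuous fun p : unitInterval × OrderComplex X =>
      (Set.range f).indicator (phi0 hmono hle p.2).1 z := by
    by_cases hz : z ∈ Set.range f
    · simpa only [Set.indicator_apply, if_pos hz] using hu
    · simpa only [Set.indicator_apply, if_neg hz] using continuous_const
  exact ((continuous_const.sub ht).mul (hind.div hτ hτne)).add (ht.mul hu)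

lemma mix2_of_mem {p : unitInterval × OrderComplex X}
    (h : p.2 ∈ OrderComplex.imageSub f) : mix2 hmono hle p = p.2 := by
  classical
  apply Subtype.ext
  funext z
  show mixF (f := f) (p.1 : ℝ) (phi0 hmono hle p.2) z = p.2.1 z
  rw [phi0_of_mem hmono hle h]
  have hτ : mass (Set.range f) p.2 = 1 := (mem_imageSub_iff p.2).1 h
  have hind : (Set.range f).indicator p.2.1 z = p.2.1 z := by
    by_cases hz : z ∈ Set.range f
    · simp [Set.indicator_apply, hz]
    · have h0 : p.2.1 z = 0 := by
        by_contra h0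
        exact hz (h (Function.mem_support.2 h0))
      simp [Set.indicator_apply, hz, h0]
  rw [mixF, hτ, hind]
  ring

/-- the retraction -/
def retr : C(OrderComplex X, OrderComplex X) :=
  ⟨fun w => mix2 hmono hle (0, w),
    (continuous_mix2 hmono hle).comp (continuous_const.prodMk continuous_id)⟩

/-- `phi0` as a bundled continuous map -/
def phi0C : C(OrderComplex X, OrderComplex X) :=
  ⟨phi0 hmono hle, continuous_phi0 hmono hle⟩

/-- first homotopy : from the retraction to `phi0`, within the star, rel the subcomplex -/
def homotopy1 : ContinuousMap.HomotopyRel (retr hmono hle) (phi0C hmono hle)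
    (OrderComplex.imageSub f) where
  toFun := mix2 hmono hle
  continuous_toFun := continuous_mix2 hmono hle
  map_zero_left := fun w => rfl
  map_one_left := fun w => by
    apply Subtype.ext
    funext z
    show mixF (f := f) ((1 : unitInterval) : ℝ) (phi0 hmono hle w) z
      = (phi0 hmono hle w).1 z
    rw [mixF]
    norm_num
  prop' := fun t w hw => by
    have h1 : mix2 hmono hle (t, w) = w := mix2_of_mem hmono hle hw
    have h2 : retr hmono hle w = w := mix2_of_mem hmono hle hw
    show mix2 hmono hle (t, w) = retr hmono hle w
    rw [h1, h2]

/-- second homotopy : from `phi0` to the identity, rel the subcomplex -/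
def homotopy2 : ContinuousMap.HomotopyRel (phi0C hmono hle)
    (ContinuousMap.id (OrderComplex X)) (OrderComplex.imageSub f) where
  toFun := PhiFun hmono hle
  continuous_toFun := continuous_PhiFun hmono hle
  map_zero_left := fun w => rfl
  map_one_left := fun w => PhiFun_one hmono hle w
  prop' := fun t w hw => by
    show PhiFun hmono hle (t, w) = phi0C hmono hle w
    rw [PhiFun_of_mem hmono hle hw]
    exact (phi0_of_mem hmono hle hw).symm

theorem core (hm : Monotone f) (hl : ∀ x, f x ≤ x) : ∃ r : C(OrderComplex X, OrderComplex X),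
    (∀ w, r w ∈ OrderComplex.imageSub f) ∧
    (∀ w ∈ OrderComplex.imageSub f, r w = w) ∧
    ContinuousMap.HomotopicRel r (ContinuousMap.id (OrderComplex X))
      (OrderComplex.imageSub f) := by
  classical
  refine ⟨retr hm hl, ?_, ?_, ?_⟩
  · intro w
    show Function.support (retr hm hl w).1 ⊆ Set.range f
    intro z hz
    rw [Function.mem_support] at hz
    by_contra hz2
    apply hz
    show mixF (f := f) ((0 : unitInterval) : ℝ) (phi0 hm hl w) z = 0
    have hind : (Set.range f).indicator (phi0 hm hl w).1 z = 0 :=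
      Set.indicator_of_notMem hz2 _
    rw [mixF, hind]
    norm_num
  · intro w hw
    exact mix2_of_mem hm hl hw
  · exact ⟨(homotopy1 hm hl).trans (homotopy2 hm hl)⟩
end Homotopies
end WithMap
section Dual

variable (X) in
/-- repackaging a point of the order complex of `X` as one of `Xᵒᵈ` -/
def toDualOC : OrderComplex X → OrderComplex Xᵒᵈ := fun w =>
  ⟨w.1, w.2.1, fun a ha b hb hne => Or.symm (w.2.2.1 ha hb hne), w.2.2.2.1, w.2.2.2.2⟩

variable (X) in
/-- repackaging a point of the order complex of `Xᵒᵈ` as one of `X` -/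
def ofDualOC : OrderComplex Xᵒᵈ → OrderComplex X := fun w =>
  ⟨w.1, w.2.1, fun a ha b hb hne => Or.symm (w.2.2.1 ha hb hne), w.2.2.2.1, w.2.2.2.2⟩

lemma continuous_toDualOC : Continuous (toDualOC X) :=
  Continuous.subtype_mk continuous_subtype_val _

lemma continuous_ofDualOC : Continuous (ofDualOC X) :=
  Continuous.subtype_mk continuous_subtype_val _

lemma ofDual_toDual (w : OrderComplex X) : ofDualOC X (toDualOC X w) = w :=
  Subtype.ext rfl

end Dual
end QuillenAux

/-- Poset Lemma (Quillen): if `f : X → X` is a poset map with `f x ≤ x` for all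
`x` (or `f x ≥ x` for all `x`), then the order complex of `f(X)` is a
deformation retract of the order complex of `X`; in particular the inclusion
induces a homotopy equivalence. -/
theorem stmt_9 (X : Type*) [PartialOrder X] (f : X → X) (hmono : Monotone f)
    (h : (∀ x, f x ≤ x) ∨ (∀ x, x ≤ f x)) :
    ∃ r : C(OrderComplex X, OrderComplex X),
      (∀ w, r w ∈ OrderComplex.imageSub f) ∧
      (∀ w ∈ OrderComplex.imageSub f, r w = w) ∧
      ContinuousMap.HomotopicRel r (ContinuousMap.id (OrderComplex X))
        (OrderComplex.imageSub f) := by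
  rcases h with hle | hge
  · exact QuillenAux.core (f := f) hmono hle
  · -- dualize
    let f' : Xᵒᵈ → Xᵒᵈ := fun x => OrderDual.toDual (f (OrderDual.ofDual x))
    have hm' : Monotone f' := fun a b hab => hmono hab
    have hl' : ∀ x : Xᵒᵈ, f' x ≤ x := fun x => hge (OrderDual.ofDual x)
    obtain ⟨r', h1, h2, ⟨F⟩⟩ := QuillenAux.core (X := Xᵒᵈ) (f := f') hm' hl'
    set d1 := QuillenAux.toDualOC X with hd1
    set d2 := QuillenAux.ofDualOC X with hd2
    refine ⟨⟨fun w => d2 (r' (d1 w)),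
      QuillenAux.continuous_ofDualOC.comp
        (r'.continuous.comp QuillenAux.continuous_toDualOC)⟩, ?_, ?_, ?_⟩
    · intro w
      exact h1 (d1 w)
    · intro w hw
      have : r' (d1 w) = d1 w := h2 (d1 w) hw
      show d2 (r' (d1 w)) = w
      rw [this]
      exact QuillenAux.ofDual_toDual w
    · refine ⟨?_⟩
      refine
        { toFun := fun p => d2 (F (p.1, d1 p.2))
          continuous_toFun := QuillenAux.continuous_ofDualOC.comp
            (F.toHomotopy.toContinuousMap.continuous.comp
              (continuous_fst.prodMk
                (QuillenAux.continuous_toDualOC.comp continuous_snd)))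
          map_zero_left := fun w => by
            show d2 (F (0, d1 w)) = _
            rw [F.apply_zero]
            rfl
          map_one_left := fun w => by
            show d2 (F (1, d1 w)) = _
            rw [F.apply_one]
            exact QuillenAux.ofDual_toDual w
          prop' := fun t x hx => by
            show d2 (F (t, d1 x)) = _
            rw [F.eq_fst t (by exact hx)]
            rfl }
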